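/- Let Σ_X be a Fano fan of dimension n refining a smooth complete fan Σ_Y (corresponding to an equivariant birational morphism f : X → Y), let x ∈ G(Σ_X), and let η ∈ Σ_Y be the cone of dimension k whose relative interior contains x, so that f maps the irreducible invariant divisor E = V(x) ⊂ X onto the invariant subvariety A = V(η) ⊂ Y. Then ρ_Y − ρ_A ≤ 3, where ρ_Y = #G(Σ_Y) − n and ρ_A = #{(k+1)-dimensional cones of Σ_Y containing η} − (n − k). -/

import Mathlib

open Finset

namespace ToricFano

/-- The lattice `N ≅ ℤⁿ`. -/
abbrev NZ (n : ℕ) := Fin n → ℤ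
/-- The rational vector space `N_ℚ ≅ ℚⁿ`. -/
abbrev NQ (n : ℕ) := Fin n → ℚ

/-- The canonical map `N → N_ℚ`. -/
def toQ {n : ℕ} (v : NZ n) : NQ n := fun i => (v i : ℚ)

/-- The cone (set of nonnegative rational combinations) spanned by a finite set of
lattice points. -/
def coneSpan {n : ℕ} (s : Finset (NZ n)) : Set (NQ n) :=
  { p | ∃ c : NZ n → ℚ, (∀ v, 0 ≤ c v) ∧ p = ∑ v ∈ s, c v • toQ v }

/-- The relative interior of the cone spanned by a finite set of lattice points. -/
def relInt {n : ℕ} (s : Finset (NZ n)) : Set (NQ n) :=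
  { p | ∃ c : NZ n → ℚ, (∀ v ∈ s, 0 < c v) ∧ p = ∑ v ∈ s, c v • toQ v }

/-- A smooth complete fan of dimension `n`, encoded combinatorially: a cone is recorded
as the finite set of the primitive generators of its rays. -/
structure Fan (n : ℕ) where
  gens : Finset (NZ n)
  cones : Finset (Finset (NZ n))
  empty_mem : ∅ ∈ cones
  cones_subset : ∀ σ ∈ cones, σ ⊆ gens
  gens_mem : ∀ x ∈ gens, ({x} : Finset (NZ n)) ∈ cones
  downward : ∀ σ ∈ cones, ∀ τ ⊆ σ, τ ∈ cones
  smooth : ∀ σ ∈ cones, ∃ B : Module.Basis (Fin n) ℤ (NZ n), (σ : Set (NZ n)) ⊆ Set.range B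
  inter : ∀ σ ∈ cones, ∀ τ ∈ cones, coneSpan σ ∩ coneSpan τ = coneSpan (σ ∩ τ)
  complete : ∀ p : NQ n, ∃ σ ∈ cones, p ∈ coneSpan σ

/-- `P` is a primitive collection: a set of generators not spanning a cone, every proper
subset of which spans a cone. -/
def IsPrimColl {n : ℕ} (F : Fan n) (P : Finset (NZ n)) : Prop :=
  P ⊆ F.gens ∧ P ∉ F.cones ∧ ∀ Q ⊂ P, Q ∈ F.cones

/-- The primitive relation of the primitive collection `P`: `σ` is the unique cone of the
fan whose relative interior contains `∑ P`, and `a` records the (positive) coefficients,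
so that `∑_{v∈P} v = ∑_{v∈σ} a v • v`. -/
def IsPrimRel {n : ℕ} (F : Fan n) (P σ : Finset (NZ n)) (a : NZ n → ℕ) : Prop :=
  IsPrimColl F P ∧ σ ∈ F.cones ∧ (∀ v, v ∉ σ → a v = 0) ∧ (∀ v ∈ σ, 0 < a v) ∧
    ∑ v ∈ P, v = ∑ v ∈ σ, (a v : ℤ) • v

/-- The degree of the primitive relation with collection `P`, cone `σ`, coefficients `a`. -/
def prDegree {n : ℕ} (P σ : Finset (NZ n)) (a : NZ n → ℕ) : ℤ :=
  (P.card : ℤ) - ∑ v ∈ σ, (a v : ℤ)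

/-- A complete smooth fan is Fano when the convex hull of the generators is a polytope
with vertex set exactly the generators whose face fan is the fan itself: equivalently,
for each maximal cone the linear functional taking value `1` on its generators takes
values `< 1` on all other generators. -/
def IsFano {n : ℕ} (F : Fan n) : Prop :=
  ∀ σ ∈ F.cones, σ.card = n →
    ∃ u : NQ n →ₗ[ℚ] ℚ, (∀ v ∈ σ, u (toQ v) = 1) ∧
      ∀ z ∈ F.gens, z ∉ σ → u (toQ z) < 1

/-- An integral/rational relation among the generators, i.e. an element of `A₁(Σ) ⊗ ℚ`. -/
def IsRel {n : ℕ} (F : Fan n) (r : NZ n → ℚ) : Prop :=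
  (∀ v, v ∉ F.gens → r v = 0) ∧ ∑ v ∈ F.gens, r v • toQ v = 0

/-- The relation attached to a wall (an `(n-1)`-dimensional cone) of the fan. -/
def IsWallRel {n : ℕ} (F : Fan n) (r : NZ n → ℚ) : Prop :=
  ∃ ω ∈ F.cones, ω.card = n - 1 ∧ ∃ u u' : NZ n, u ≠ u' ∧ u ∉ ω ∧ u' ∉ ω ∧
    insert u ω ∈ F.cones ∧ insert u' ω ∈ F.cones ∧ IsRel F r ∧
    r u = 1 ∧ r u' = 1 ∧ ∀ v, v ∉ insert u (insert u' ω) → r v = 0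

/-- The Mori cone `NE(Σ)`: the convex cone generated by the wall relations. -/
def NECone {n : ℕ} (F : Fan n) : Set (NZ n → ℚ) :=
  { r | ∃ (k : ℕ) (c : Fin k → ℚ) (w : Fin k → (NZ n → ℚ)),
      (∀ i, 0 ≤ c i) ∧ (∀ i, IsWallRel F (w i)) ∧ r = ∑ i, c i • w i }

/-- A class is extremal if it spans a one-dimensional face of `NE(Σ)`. -/
def IsExtremal {n : ℕ} (F : Fan n) (r : NZ n → ℚ) : Prop :=
  r ∈ NECone F ∧ ∀ s ∈ NECone F, ∀ t ∈ NECone F, r = s + t →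
    (∃ c : ℚ, 0 ≤ c ∧ s = c • r) ∧ ∃ c : ℚ, 0 ≤ c ∧ t = c • r

/-- The numerical class associated to the primitive relation with collection `P` and
coefficients `a` (1 on the elements of `P`, `-a` on the right-hand side). -/
def primRelClass {n : ℕ} (P : Finset (NZ n)) (a : NZ n → ℕ) : NZ n → ℚ :=
  fun v => (if v ∈ P then (1 : ℚ) else 0) - (a v : ℚ)

/-- `FX` refines `FY`: every cone of `FY` is a union of cones of `FX`. -/
def Refines {n : ℕ} (FX FY : Fan n) : Prop :=
  ∀ τ ∈ FY.cones, ∃ S : Finset (Finset (NZ n)), S ⊆ FX.cones ∧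
    coneSpan τ = ⋃ σ ∈ S, coneSpan σ

/-- The combinatorial star subdivision at `τ` of a collection of (smooth simplicial)
cones: insert the new ray through `∑ τ` and subdivide every cone containing `τ`. -/
def starSubCones {n : ℕ} (D : Finset (Finset (NZ n))) (τ : Finset (NZ n)) :
    Finset (Finset (NZ n)) :=
  D.filter (fun σ => ¬ τ ⊆ σ) ∪
    (D.filter (fun μ => ¬ τ ⊆ μ ∧ μ ∪ τ ∈ D)).image (insert (∑ v ∈ τ, v))

/-- `F'` is the star subdivision of `F` at a cone of dimension at least 2;
it corresponds to the blow-up of the toric variety along an invariant subvariety. -/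
def IsStarSubFan {n : ℕ} (F' F : Fan n) : Prop :=
  ∃ τ ∈ F.cones, 2 ≤ τ.card ∧
    F'.gens = insert (∑ v ∈ τ, v) F.gens ∧
    F'.cones = starSubCones F.cones τ

/-- Projectivity of a complete fan: existence of a strictly convex support function,
linear on each maximal cone. -/
def IsProjective {n : ℕ} (F : Fan n) : Prop :=
  ∃ φ : NQ n → ℚ, ∀ σ ∈ F.cones, σ.card = n →
    ∃ u : NQ n →ₗ[ℚ] ℚ, (∀ p ∈ coneSpan σ, φ p = u p) ∧
      ∀ p, p ∉ coneSpan σ → φ p < u p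

/-- A primitive relation is contractible if the fan has Reid's wall-geometry around it
(equivalently, the class admits an equivariant contraction). -/
def IsContractible {n : ℕ} (F : Fan n) (P σ : Finset (NZ n)) (a : NZ n → ℕ) : Prop :=
  IsPrimRel F P σ a ∧
    ∀ ν ∈ F.cones, (σ ∪ ν) ∈ F.cones → (∀ z ∈ ν, z ∉ P ∧ z ∉ σ) →
      ∀ x ∈ P, ((P.erase x) ∪ σ ∪ ν) ∈ F.cones


section Aux

variable {n : ℕ}

/-- `toQ` as an additive monoid hom. -/
def toQHom (n : ℕ) : NZ n →+ NQ n where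
  toFun := toQ
  map_zero' := by funext i; simp [toQ]
  map_add' := fun a b => by funext i; simp [toQ]

lemma toQ_add {n : ℕ} (a b : NZ n) : toQ (a + b) = toQ a + toQ b := by
  funext i; simp [toQ]

lemma toQ_zero {n : ℕ} : toQ (0 : NZ n) = 0 := by funext i; simp [toQ]

lemma toQ_neg {n : ℕ} (a : NZ n) : toQ (-a) = -toQ a := by funext i; simp [toQ]

lemma toQ_inj {n : ℕ} {a b : NZ n} (h : toQ a = toQ b) : a = b := by
  funext i
  have h2 := congrFun h i
  simpa [toQ] using h2

lemma toQ_zsmul {n : ℕ} (k : ℤ) (a : NZ n) : toQ (k • a) = (k : ℚ) • toQ a := by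
  funext i; simp [toQ]

lemma toQ_eq_zero_iff {n : ℕ} {a : NZ n} : toQ a = 0 ↔ a = 0 :=
  ⟨fun h => toQ_inj (by rw [h, toQ_zero]), fun h => by rw [h, toQ_zero]⟩

-- coneSpan basic lemmas
lemma mem_coneSpan_of_mem {n : ℕ} {s : Finset (NZ n)} {v : NZ n} (hv : v ∈ s) :
    toQ v ∈ coneSpan s := by
  classical
  refine ⟨fun u => if u = v then 1 else 0, fun u => by positivity, ?_⟩
  rw [Finset.sum_congr rfl (fun u _ => rfl)]
  simp only [ite_smul, one_smul, zero_smul]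
  rw [Finset.sum_ite_eq' s v (fun u => toQ u)]
  simp [hv]

lemma coneSpan_mono {n : ℕ} {s t : Finset (NZ n)} (h : s ⊆ t) :
    coneSpan s ⊆ coneSpan t := by
  classical
  rintro p ⟨c, hc, rfl⟩
  refine ⟨fun v => if v ∈ s then c v else 0, fun v => by dsimp only; split <;> [exact hc v; rfl], ?_⟩
  rw [← Finset.sum_subset h (fun v _ hvs => by simp [hvs])]
  exact Finset.sum_congr rfl fun v hv => by simp [hv]

lemma relInt_subset_coneSpan {n : ℕ} (s : Finset (NZ n)) : relInt s ⊆ coneSpan s := by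
  classical
  rintro p ⟨c, hc, rfl⟩
  refine ⟨fun v => if v ∈ s then c v else 0, fun v => ?_, ?_⟩
  · dsimp only; split
    · exact le_of_lt (hc _ (by assumption))
    · rfl
  · exact Finset.sum_congr rfl fun v hv => by simp [hv]

lemma toQ_mem_relInt_self {n : ℕ} (v : NZ n) : toQ v ∈ relInt ({v} : Finset (NZ n)) :=
  ⟨fun _ => 1, fun _ _ => one_pos, by simp⟩

lemma add_mem_relInt_pair {n : ℕ} {a b : NZ n} (hab : a ≠ b) :
    toQ a + toQ b ∈ relInt ({a, b} : Finset (NZ n)) :=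
  ⟨fun _ => 1, fun _ _ => one_pos, by rw [Finset.sum_pair hab]; simp⟩

lemma add_mem_coneSpan_pair {n : ℕ} {a b : NZ n} (hab : a ≠ b) :
    toQ a + toQ b ∈ coneSpan ({a, b} : Finset (NZ n)) :=
  relInt_subset_coneSpan _ (add_mem_relInt_pair hab)

lemma mem_relInt_empty {n : ℕ} {p : NQ n} (h : p ∈ relInt (∅ : Finset (NZ n))) : p = 0 := by
  obtain ⟨c, -, rfl⟩ := h; simp

/-- The ℚ-basis of `NQ n` obtained from a ℤ-basis of `NZ n`, together with
the compatibility of coordinates. -/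
lemma exists_ratBasis {n : ℕ} (B : Module.Basis (Fin n) ℤ (NZ n)) :
    ∃ BQ : Module.Basis (Fin n) ℚ (NQ n), (∀ i, BQ i = toQ (B i)) ∧
      (∀ m : NZ n, ∀ i, BQ.repr (toQ m) i = ((B.repr m i : ℤ) : ℚ)) := by
  classical
  set std : Module.Basis (Fin n) ℤ (NZ n) := Pi.basisFun ℤ (Fin n) with hstd
  have hInv : Invertible (std.toMatrix B) := std.invertibleToMatrix B
  set A : Matrix (Fin n) (Fin n) ℚ := (Int.castRingHom ℚ).mapMatrix (std.toMatrix B) with hA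
  have hAinv : Invertible A := hInv.map (RingHom.mapMatrix (Int.castRingHom ℚ))
  set e := A.toLinearEquiv' hAinv with he
  set BQ := (Pi.basisFun ℚ (Fin n)).map e with hBQ
  have hentry : ∀ i j, A i j = ((B j i : ℤ) : ℚ) := by
    intro i j
    simp [hA, Module.Basis.toMatrix, hstd]
  have happ : ∀ i, BQ i = toQ (B i) := by
    intro i
    funext k
    have : BQ i = e ((Pi.basisFun ℚ (Fin n)) i) := by simp [hBQ]
    rw [this]
    have : e ((Pi.basisFun ℚ (Fin n)) i) = A.mulVec (Pi.single i 1) := by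
      simp [he, Matrix.toLinearEquiv', Matrix.toLin'_apply, Pi.basisFun_apply]
    rw [this]
    simp [Matrix.mulVec_single, hentry, toQ]
  refine ⟨BQ, happ, ?_⟩
  intro m i
  have hm : toQ m = ∑ j, ((B.repr m j : ℤ) : ℚ) • BQ j := by
    have h1 : (∑ j, B.repr m j • B j : NZ n) = m := B.sum_repr m
    calc toQ m = toQ (∑ j, B.repr m j • B j) := by rw [h1]
    _ = ∑ j, toQ (B.repr m j • B j) := map_sum (toQHom n) _ _
    _ = ∑ j, ((B.repr m j : ℤ) : ℚ) • BQ j := by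
        refine Finset.sum_congr rfl fun j _ => ?_
        rw [toQ_zsmul, happ]
  rw [hm]
  rw [map_sum]
  simp only [map_smul, Module.Basis.repr_self]
  rw [Finsupp.finset_sum_apply]
  simp only [Finsupp.smul_apply, Finsupp.single_apply, smul_eq_mul]
  rw [Finset.sum_eq_single i (fun j _ hji => by simp [hji]) (by simp)]
  simp


/-- Coordinate functionals on a cone of a fan. -/
lemma exists_coords (F : Fan n) {σ : Finset (NZ n)} (hσ : σ ∈ F.cones) :
    ∃ L : NZ n → (NQ n →ₗ[ℚ] ℚ),
      (∀ v ∈ σ, ∀ u ∈ σ, L v (toQ u) = if u = v then 1 else 0) ∧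
      (∀ v ∈ σ, ∀ m : NZ n, ∃ k : ℤ, L v (toQ m) = (k : ℚ)) ∧
      (σ.card = n → ∀ p : NQ n, p = ∑ v ∈ σ, L v p • toQ v) := by
  classical
  obtain ⟨B, hB⟩ := F.smooth σ hσ
  obtain ⟨BQ, happ, hrepr⟩ := exists_ratBasis B
  refine ⟨fun v => if h : ∃ i, B i = v then BQ.coord h.choose else 0, ?_, ?_, ?_⟩
  · intro v hv u hu
    have hve : ∃ i, B i = v := hB hv
    have hue : ∃ i, B i = u := hB hu
    have htoQ : toQ u = BQ hue.choose := by rw [happ, hue.choose_spec]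
    dsimp only
    rw [dif_pos hve, htoQ]
    rw [Module.Basis.coord_apply, Module.Basis.repr_self, Finsupp.single_apply]
    by_cases huv : u = v
    · have : hue.choose = hve.choose := B.injective (by rw [hue.choose_spec, hve.choose_spec, huv])
      simp [this, huv]
    · have : hue.choose ≠ hve.choose := fun hc => huv (by rw [← hue.choose_spec, ← hve.choose_spec, hc])
      simp [this, huv]
  · intro v hv m
    have hve : ∃ i, B i = v := hB hv
    dsimp only
    rw [dif_pos hve, Module.Basis.coord_apply, hrepr]
    exact ⟨_, rfl⟩
  · intro hcard p
    have himg : σ = Finset.image B Finset.univ := by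
      apply Finset.eq_of_subset_of_card_le
      · intro v hv
        obtain ⟨i, hi⟩ := hB hv
        exact Finset.mem_image.2 ⟨i, Finset.mem_univ i, hi⟩
      · rw [Finset.card_image_of_injective _ B.injective, Finset.card_univ, Fintype.card_fin, hcard]
    have hsum : ∑ v ∈ σ, (if h : ∃ i, B i = v then BQ.coord h.choose else 0) p • toQ v
        = ∑ i, BQ.repr p i • BQ i := by
      rw [himg, Finset.sum_image (fun a _ b _ h => B.injective h)]
      refine Finset.sum_congr rfl fun i _ => ?_
      have hie : ∃ j, B j = B i := ⟨i, rfl⟩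
      have : hie.choose = i := B.injective hie.choose_spec
      rw [dif_pos hie, Module.Basis.coord_apply, this, happ]
    rw [hsum, Module.Basis.sum_repr]

lemma gen_ne_zero (F : Fan n) {g : NZ n} (hg : g ∈ F.gens) : g ≠ 0 := by
  obtain ⟨B, hB⟩ := F.smooth _ (F.gens_mem g hg)
  have hgm : g ∈ (↑({g} : Finset (NZ n)) : Set (NZ n)) := by simp
  obtain ⟨i, hi⟩ := hB hgm
  rw [← hi]
  exact B.ne_zero i

lemma toQ_gen_ne_zero (F : Fan n) {g : NZ n} (hg : g ∈ F.gens) : toQ g ≠ 0 :=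
  fun h => gen_ne_zero F hg (toQ_eq_zero_iff.1 h)

lemma coeff_unique (F : Fan n) {σ : Finset (NZ n)} (hσ : σ ∈ F.cones) {c d : NZ n → ℚ}
    (h : ∑ v ∈ σ, c v • toQ v = ∑ v ∈ σ, d v • toQ v) : ∀ v ∈ σ, c v = d v := by
  obtain ⟨L, hdelta, -, -⟩ := exists_coords F hσ
  intro v hv
  have key : ∀ e : NZ n → ℚ, (L v) (∑ u ∈ σ, e u • toQ u) = e v := by
    intro e
    rw [map_sum]
    rw [Finset.sum_eq_single v (fun u hu huv => by
      rw [map_smul, hdelta v hv u hu, if_neg huv]; simp) (fun hv' => absurd hv hv')]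
    rw [map_smul, hdelta v hv v hv, if_pos rfl]
    simp
  have h1 := key c
  rw [h, key d] at h1
  exact h1.symm

/-- A relative interior point forces cone containment. -/
lemma subset_of_relInt_mem_coneSpan (F : Fan n) {σ τ : Finset (NZ n)}
    (hσ : σ ∈ F.cones) (hτ : τ ∈ F.cones) {p : NQ n}
    (hp : p ∈ relInt σ) (hpτ : p ∈ coneSpan τ) : σ ⊆ τ := by
  classical
  have hmem : p ∈ coneSpan (σ ∩ τ) := by
    rw [← F.inter σ hσ τ hτ]
    exact ⟨relInt_subset_coneSpan σ hp, hpτ⟩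
  obtain ⟨d, hd, hpd⟩ := hmem
  obtain ⟨c, hc, hpc⟩ := hp
  have hsub : ∑ v ∈ σ ∩ τ, (if v ∈ τ then d v else 0) • toQ v
      = ∑ v ∈ σ, (if v ∈ τ then d v else 0) • toQ v := by
    apply Finset.sum_subset Finset.inter_subset_left
    intro v hv hvn
    have hvτ : v ∉ τ := fun hvt => hvn (Finset.mem_inter.2 ⟨hv, hvt⟩)
    rw [if_neg hvτ, zero_smul]
  have hext : p = ∑ v ∈ σ, (if v ∈ τ then d v else 0) • toQ v := by
    rw [hpd, ← hsub]
    exact Finset.sum_congr rfl fun v hv => by rw [if_pos (Finset.mem_inter.1 hv).2]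
  intro v hv
  have := coeff_unique F hσ (hpc.symm.trans hext) v hv
  by_contra hvt
  rw [if_neg hvt] at this
  exact absurd this (ne_of_gt (hc v hv))

lemma gen_mem_of_mem_coneSpan (F : Fan n) {g : NZ n} {τ : Finset (NZ n)}
    (hg : g ∈ F.gens) (hτ : τ ∈ F.cones) (h : toQ g ∈ coneSpan τ) : g ∈ τ := by
  have := subset_of_relInt_mem_coneSpan F (F.gens_mem g hg) hτ (toQ_mem_relInt_self g) h
  exact this (Finset.mem_singleton_self g)

lemma coord_sum {τ : Finset (NZ n)} {L : NZ n → (NQ n →ₗ[ℚ] ℚ)}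
    (hdelta : ∀ v ∈ τ, ∀ u ∈ τ, L v (toQ u) = if u = v then 1 else 0)
    (c : NZ n → ℚ) {v : NZ n} (hv : v ∈ τ) :
    L v (∑ u ∈ τ, c u • toQ u) = c v := by
  rw [map_sum]
  rw [Finset.sum_eq_single v (fun u hu huv => by
    rw [map_smul, hdelta v hv u hu, if_neg huv]; simp) (fun hv' => absurd hv hv')]
  rw [map_smul, hdelta v hv v hv, if_pos rfl]
  simp

lemma coord_nonneg_of_mem {τ : Finset (NZ n)} {L : NZ n → (NQ n →ₗ[ℚ] ℚ)}
    (hdelta : ∀ v ∈ τ, ∀ u ∈ τ, L v (toQ u) = if u = v then 1 else 0)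
    {x : NQ n} (hx : x ∈ coneSpan τ) {v : NZ n} (hv : v ∈ τ) : 0 ≤ L v x := by
  obtain ⟨c, hc, rfl⟩ := hx
  rw [coord_sum hdelta c hv]
  exact hc v

lemma coneSpan_subset_span {s : Finset (NZ n)} :
    coneSpan s ⊆ (Submodule.span ℚ (toQ '' (s : Set (NZ n))) : Set (NQ n)) := by
  rintro x ⟨c, hc, rfl⟩
  refine Submodule.sum_mem _ fun v hv => Submodule.smul_mem _ _ ?_
  exact Submodule.subset_span ⟨v, hv, rfl⟩

lemma cone_indep (F : Fan n) {σ : Finset (NZ n)} (hσ : σ ∈ F.cones) :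
    LinearIndependent ℚ ((↑) : (toQ '' (σ : Set (NZ n))) → NQ n) := by
  obtain ⟨B, hB⟩ := F.smooth σ hσ
  obtain ⟨BQ, happ, -⟩ := exists_ratBasis B
  have hsub : toQ '' (σ : Set (NZ n)) ⊆ Set.range BQ := by
    rintro x ⟨v, hv, rfl⟩
    obtain ⟨i, hi⟩ := hB hv
    exact ⟨i, by rw [happ, hi]⟩
  exact BQ.linearIndependent.linearIndepOn_id.mono hsub

lemma span_ne_top_of_small (F : Fan n) {σ : Finset (NZ n)} (hσ : σ ∈ F.cones)
    (hcard : σ.card ≠ n) :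
    Submodule.span ℚ (toQ '' (σ : Set (NZ n))) ≠ ⊤ := by
  classical
  intro htop
  have hcoe : ((σ.image toQ : Finset (NQ n)) : Set (NQ n)) = toQ '' (σ : Set (NZ n)) :=
    Finset.coe_image
  have hind : LinearIndependent ℚ ((↑) : ((σ.image toQ : Finset (NQ n)) : Set (NQ n)) → NQ n) := by
    rw [hcoe]
    exact cone_indep F hσ
  have h1 : Module.finrank ℚ (Submodule.span ℚ ((σ.image toQ : Finset (NQ n)) : Set (NQ n)))
      = (σ.image toQ).card := finrank_span_finset_eq_card hind
  rw [hcoe] at h1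
  rw [htop] at h1
  rw [finrank_top, Module.finrank_fintype_fun_eq_card, Fintype.card_fin] at h1
  rw [Finset.card_image_of_injective _ (fun a b h => toQ_inj h)] at h1
  exact hcard h1.symm

lemma exists_avoid (s : Finset (Finset (NZ n))) (f : Finset (NZ n) → (NQ n →ₗ[ℚ] ℚ))
    (hf : ∀ σ ∈ s, f σ ≠ 0) : ∃ w : NQ n, ∀ σ ∈ s, f σ w ≠ 0 := by
  classical
  induction s using Finset.induction with
  | empty => exact ⟨0, by simp⟩
  | @insert σ₀ s hσ₀ ih =>
    obtain ⟨w, hw⟩ := ih (fun σ hσ => hf σ (Finset.mem_insert_of_mem hσ))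
    have h0 : f σ₀ ≠ 0 := hf σ₀ (Finset.mem_insert_self σ₀ s)
    obtain ⟨v, hv⟩ : ∃ v, f σ₀ v ≠ 0 := by
      by_contra hc
      push_neg at hc
      exact h0 (LinearMap.ext hc)
    obtain ⟨t, ht⟩ := Finset.exists_notMem
      ((insert σ₀ s).image (fun σ => -(f σ w)/(f σ v)))
    refine ⟨w + t • v, fun σ hσ => ?_⟩
    have htσ : t ≠ -(f σ w)/(f σ v) := fun hc =>
      ht (Finset.mem_image.2 ⟨σ, hσ, hc.symm⟩)
    rw [map_add, map_smul]
    rcases Finset.mem_insert.1 hσ with rfl | hσs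
    · intro hc
      apply htσ
      rw [eq_div_iff hv]; simp only [smul_eq_mul] at hc
      linarith [hc]
    · by_cases hfv : f σ v = 0
      · rw [hfv]
        simpa using hw σ hσs
      · intro hc
        apply htσ
        rw [eq_div_iff hfv]; simp only [smul_eq_mul] at hc
        linarith [hc]

lemma quad_three {a b c x y z : ℚ} (hxy : x ≠ y) (hxz : x ≠ z) (hyz : y ≠ z)
    (h1 : a + x * b + x * x * c = 0) (h2 : a + y * b + y * y * c = 0)
    (h3 : a + z * b + z * z * c = 0) : c = 0 := by
  have k1 : (x - y) * (b + (x + y) * c) = 0 := by linear_combination h1 - h2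
  have k2 : (x - z) * (b + (x + z) * c) = 0 := by linear_combination h1 - h3
  have k1' : b + (x + y) * c = 0 := by
    rcases mul_eq_zero.1 k1 with h | h
    · exact absurd (sub_eq_zero.1 h) hxy
    · exact h
  have k2' : b + (x + z) * c = 0 := by
    rcases mul_eq_zero.1 k2 with h | h
    · exact absurd (sub_eq_zero.1 h) hxz
    · exact h
  have k3 : (y - z) * c = 0 := by linear_combination k1' - k2'
  rcases mul_eq_zero.1 k3 with h | h
  · exact absurd (sub_eq_zero.1 h) hyz
  · exact h

/-- Workhorse: every point lies in a full-dimensional cone, which moreover can be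
chosen to absorb arbitrarily small perturbations in a prescribed direction `q`
(up to a fixed second-order correction `w`). -/
lemma exists_max_cone_approach (F : Fan n) (p q : NQ n) :
    ∃ τ ∈ F.cones, τ.card = n ∧ p ∈ coneSpan τ ∧
      ∃ w : NQ n, ∀ ε : ℚ, 0 < ε → ∃ δ : ℚ, 0 < δ ∧ δ < ε ∧
        p + δ • q + (δ * δ) • w ∈ coneSpan τ := by
  classical
  have hfex : ∀ σ ∈ F.cones.filter (fun σ => σ.card ≠ n),
      ∃ f : NQ n →ₗ[ℚ] ℚ, f ≠ 0 ∧ ∀ x ∈ coneSpan σ, f x = 0 := by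
    intro σ hσ
    rw [Finset.mem_filter] at hσ
    have hne := span_ne_top_of_small F hσ.1 hσ.2
    obtain ⟨f, hf0, hfb⟩ := Submodule.exists_dual_map_eq_bot_of_lt_top
      (lt_top_iff_ne_top.2 hne) inferInstance
    refine ⟨f, hf0, fun x hx => ?_⟩
    have hxs : x ∈ Submodule.span ℚ (toQ '' (σ : Set (NZ n))) := coneSpan_subset_span hx
    have hm : f x ∈ Submodule.map f (Submodule.span ℚ (toQ '' (σ : Set (NZ n)))) :=
      Submodule.mem_map_of_mem hxs
    rw [hfb] at hm
    exact (Submodule.mem_bot ℚ).1 hm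
  set bad := F.cones.filter (fun σ => σ.card ≠ n) with hbad
  set fS : Finset (NZ n) → (NQ n →ₗ[ℚ] ℚ) := fun σ =>
    if h : σ ∈ bad then (hfex σ h).choose else 0 with hfS
  obtain ⟨w, hw⟩ := exists_avoid bad fS (fun σ hσ => by
    rw [hfS]; dsimp only; rw [dif_pos hσ]
    exact ((hfex σ hσ).choose_spec).1)
  set δf : ℕ → ℚ := fun j => 1 / ((j : ℚ) + 1) with hδf
  have hδpos : ∀ j, 0 < δf j := fun j => by positivity
  have hδinj : Function.Injective δf := by
    intro a b hab
    simp only [hδf] at hab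
    have ha : ((a : ℚ) + 1) ≠ 0 := by positivity
    have hb : ((b : ℚ) + 1) ≠ 0 := by positivity
    field_simp at hab
    have h2 : (a : ℚ) = b := by linarith
    exact_mod_cast h2
  set r : ℕ → NQ n := fun j => p + δf j • q + (δf j * δf j) • w with hr
  have hcc : ∀ j : ℕ, ∃ σ, σ ∈ F.cones ∧ r j ∈ coneSpan σ := by
    intro j; obtain ⟨σ, h1, h2⟩ := F.complete (r j); exact ⟨σ, h1, h2⟩
  set cc : ℕ → {σ // σ ∈ F.cones} := fun j => ⟨(hcc j).choose, (hcc j).choose_spec.1⟩ with hccdef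
  obtain ⟨τ₀, hτ₀⟩ := Finite.exists_infinite_fiber cc
  set τ := τ₀.1 with hτdef
  have hτc : τ ∈ F.cones := τ₀.2
  have hJinf : (cc ⁻¹' {τ₀} : Set ℕ).Infinite := Set.infinite_coe_iff.1 hτ₀
  have hJr : ∀ j ∈ (cc ⁻¹' {τ₀} : Set ℕ), r j ∈ coneSpan τ := by
    intro j hj
    have h1 : cc j = τ₀ := hj
    have h2 := (hcc j).choose_spec.2
    have h3 : (hcc j).choose = τ := by
      rw [hτdef, ← h1]
    rwa [h3] at h2
  have hsmall : ∀ ε : ℚ, 0 < ε → ∃ j ∈ (cc ⁻¹' {τ₀} : Set ℕ), δf j < ε := by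
    intro ε hε
    obtain ⟨j, hjJ, hjn⟩ := hJinf.exists_notMem_finset (Finset.range (⌈(1/ε : ℚ)⌉₊ + 1))
    refine ⟨j, hjJ, ?_⟩
    have hj1 : ⌈(1/ε : ℚ)⌉₊ + 1 ≤ j := by
      by_contra hcon; push_neg at hcon; exact hjn (Finset.mem_range.2 hcon)
    have h2 : (1/ε : ℚ) ≤ (⌈(1/ε : ℚ)⌉₊ : ℚ) := Nat.le_ceil _
    have h3 : ((⌈(1/ε : ℚ)⌉₊ : ℚ)) < (j : ℚ) + 1 := by
      have : ((⌈(1/ε : ℚ)⌉₊ + 1 : ℕ) : ℚ) ≤ (j : ℚ) := by exact_mod_cast hj1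
      push_cast at this
      linarith
    have h4 : (1/ε : ℚ) < (j : ℚ) + 1 := lt_of_le_of_lt h2 h3
    show (1 : ℚ) / ((j : ℚ) + 1) < ε
    rw [div_lt_iff₀ (by positivity)]
    calc (1 : ℚ) = ε * (1/ε) := by field_simp
    _ < ε * ((j : ℚ) + 1) := by exact mul_lt_mul_of_pos_left h4 hε
  have hcard : τ.card = n := by
    by_contra hne
    have hbadm : τ ∈ bad := Finset.mem_filter.2 ⟨hτc, hne⟩
    obtain ⟨j₁, hj₁⟩ := hJinf.nonempty
    obtain ⟨j₂, hj₂J, hj₂⟩ := hJinf.exists_notMem_finset {j₁}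
    obtain ⟨j₃, hj₃J, hj₃⟩ := hJinf.exists_notMem_finset {j₁, j₂}
    have hfne := hw τ hbadm
    have hfk : ∀ x ∈ coneSpan τ, fS τ x = 0 := by
      intro x hx
      have hdef : fS τ = (hfex τ hbadm).choose := by
        rw [hfS]; dsimp only; rw [dif_pos hbadm]
      rw [hdef]
      exact (hfex τ hbadm).choose_spec.2 x hx
    have heq : ∀ j ∈ (cc ⁻¹' {τ₀} : Set ℕ),
        fS τ p + δf j * fS τ q + δf j * δf j * fS τ w = 0 := by
      intro j hj
      have h0 := hfk _ (hJr j hj)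
      rw [hr] at h0
      simp only [map_add, map_smul, smul_eq_mul] at h0
      linarith [h0]
    have hne12 : δf j₁ ≠ δf j₂ := fun h =>
      (by simpa using hj₂ : j₂ ≠ j₁) (hδinj h).symm
    have hne13 : δf j₁ ≠ δf j₃ := fun h => by
      have hj3 : j₃ ≠ j₁ := by
        intro hc; exact hj₃ (by rw [hc]; exact Finset.mem_insert_self _ _)
      exact hj3 (hδinj h).symm
    have hne23 : δf j₂ ≠ δf j₃ := fun h => by
      have hj3 : j₃ ≠ j₂ := by
        intro hc
        exact hj₃ (by rw [hc]; exact Finset.mem_insert_of_mem (Finset.mem_singleton_self _))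
      exact hj3 (hδinj h).symm
    have hc0 : fS τ w = 0 :=
      quad_three hne12 hne13 hne23 (heq j₁ hj₁) (heq j₂ hj₂J) (heq j₃ hj₃J)
    exact hfne hc0
  obtain ⟨L, hdelta, hint, hspan⟩ := exists_coords F hτc
  have hpcoord : ∀ v ∈ τ, 0 ≤ L v p := by
    intro v hv
    by_contra hneg
    push_neg at hneg
    have hapos : 0 < -(L v p) := by linarith
    have hMpos : 0 < 1 + |L v q| + |L v w| := by positivity
    obtain ⟨j, hjJ, hjlt⟩ := hsmall (min 1 ((-(L v p)) / (1 + |L v q| + |L v w|)))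
      (by positivity)
    have h0 := coord_nonneg_of_mem hdelta (hJr j hjJ) hv
    have hexp : L v (r j) = L v p + δf j * L v q + (δf j * δf j) * L v w := by
      rw [hr]; simp only [map_add, map_smul, smul_eq_mul]
    rw [hexp] at h0
    have hδ1 : δf j ≤ 1 := le_of_lt (lt_of_lt_of_le hjlt (min_le_left _ _))
    have hδM : δf j < (-(L v p)) / (1 + |L v q| + |L v w|) :=
      lt_of_lt_of_le hjlt (min_le_right _ _)
    have hδp := hδpos j
    have hb1 : δf j * L v q ≤ δf j * |L v q| :=
      mul_le_mul_of_nonneg_left (le_abs_self _) (le_of_lt hδp)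
    have hb2 : (δf j * δf j) * L v w ≤ δf j * |L v w| := by
      have h1 : (δf j * δf j) * L v w ≤ (δf j * δf j) * |L v w| :=
        mul_le_mul_of_nonneg_left (le_abs_self _) (by positivity)
      have h2 : (δf j * δf j) * |L v w| ≤ δf j * |L v w| := by
        apply mul_le_mul_of_nonneg_right _ (abs_nonneg _)
        nlinarith
      linarith
    have hchain : δf j * (1 + |L v q| + |L v w|) < -(L v p) :=
      (lt_div_iff₀ hMpos).1 hδM
    nlinarith [abs_nonneg (L v q), abs_nonneg (L v w)]
  have hpmem : p ∈ coneSpan τ := by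
    refine ⟨fun v => if v ∈ τ then L v p else 0, fun v => ?_, ?_⟩
    · dsimp only; split
      · exact hpcoord v (by assumption)
      · rfl
    · conv_lhs => rw [hspan hcard p]
      exact Finset.sum_congr rfl fun v hv => by dsimp only; rw [if_pos hv]
  refine ⟨τ, hτc, hcard, hpmem, w, fun ε hε => ?_⟩
  obtain ⟨j, hjJ, hjlt⟩ := hsmall ε hε
  exact ⟨δf j, hδpos j, hjlt, hJr j hjJ⟩


lemma pair_subset {x y : NZ n} {τ : Finset (NZ n)} (hx : x ∈ τ) (hy : y ∈ τ) :
    ({x, y} : Finset (NZ n)) ⊆ τ := by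
  intro t ht
  rcases Finset.mem_insert.1 ht with rfl | ht
  · exact hx
  · rw [Finset.mem_singleton.1 ht]; exact hy

lemma fano_functional (F : Fan n) (hF : IsFano F) {τ : Finset (NZ n)}
    (hτ : τ ∈ F.cones) (hcard : τ.card = n) :
    ∃ u : NQ n →ₗ[ℚ] ℚ, (∀ v ∈ τ, u (toQ v) = 1) ∧
      (∀ g ∈ F.gens, g ∉ τ → u (toQ g) < 1) ∧
      (∀ m : NZ n, ∃ k : ℤ, u (toQ m) = (k : ℚ)) ∧
      (∀ g ∈ F.gens, u (toQ g) ≤ 1) ∧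
      (∀ g ∈ F.gens, g ∉ τ → u (toQ g) ≤ 0) ∧
      (∀ g ∈ F.gens, u (toQ g) = 1 → g ∈ τ) := by
  classical
  obtain ⟨u, hu1, hu2⟩ := hF τ hτ hcard
  obtain ⟨L, hdelta, hint, hspan⟩ := exists_coords F hτ
  have hintu : ∀ m : NZ n, ∃ k : ℤ, u (toQ m) = (k : ℚ) := by
    intro m
    set K : NZ n → ℤ := fun v => if h : v ∈ τ then (hint v h m).choose else 0 with hK
    have hKspec : ∀ v ∈ τ, L v (toQ m) = (K v : ℚ) := fun v hv => by
      rw [hK]; dsimp only; rw [dif_pos hv]; exact (hint v hv m).choose_spec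
    refine ⟨∑ v ∈ τ, K v, ?_⟩
    have hexp : toQ m = ∑ v ∈ τ, (K v : ℚ) • toQ v := by
      conv_lhs => rw [hspan hcard (toQ m)]
      exact Finset.sum_congr rfl fun v hv => by rw [hKspec v hv]
    rw [hexp, map_sum]
    have hstep : ∑ v ∈ τ, u ((K v : ℚ) • toQ v) = ∑ v ∈ τ, ((K v : ℤ) : ℚ) :=
      Finset.sum_congr rfl fun v hv => by rw [map_smul, hu1 v hv, smul_eq_mul, mul_one]
    rw [hstep]
    push_cast
    rfl
  have hle : ∀ g ∈ F.gens, u (toQ g) ≤ 1 := by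
    intro g hg
    by_cases hgτ : g ∈ τ
    · exact le_of_eq (hu1 g hgτ)
    · exact le_of_lt (hu2 g hg hgτ)
  refine ⟨u, hu1, hu2, hintu, hle, ?_, ?_⟩
  · intro g hg hgτ
    obtain ⟨k, hk⟩ := hintu g
    have hlt := hu2 g hg hgτ
    rw [hk] at hlt ⊢
    have : k < 1 := by exact_mod_cast hlt
    exact_mod_cast (by omega : k ≤ 0)
  · intro g hg hu
    by_contra hgτ
    exact absurd hu (ne_of_lt (hu2 g hg hgτ))

/-- Fano degree bound: a non-cone pair of generators sums to `0` or to a generator. -/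
lemma degree_two (F : Fan n) (hF : IsFano F) {x y : NZ n} (hx : x ∈ F.gens)
    (hy : y ∈ F.gens) (hxy : x ≠ y) (hnc : ({x, y} : Finset (NZ n)) ∉ F.cones) :
    x + y = 0 ∨ x + y ∈ F.gens := by
  classical
  obtain ⟨τ, hτ, hcard, hpm, -⟩ := exists_max_cone_approach F (toQ (x + y)) 0
  obtain ⟨L, hdelta, hint, hspan⟩ := exists_coords F hτ
  obtain ⟨u, hu1, hu2, huint, hule, hule0, humem⟩ := fano_functional F hF hτ hcard
  set K : NZ n → ℤ := fun v => if h : v ∈ τ then (hint v h (x + y)).choose else 0 with hK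
  have hKspec : ∀ v ∈ τ, L v (toQ (x + y)) = (K v : ℚ) := fun v hv => by
    rw [hK]; dsimp only; rw [dif_pos hv]; exact (hint v hv (x + y)).choose_spec
  have hKnn : ∀ v ∈ τ, 0 ≤ K v := fun v hv => by
    have h0 := coord_nonneg_of_mem hdelta hpm hv
    rw [hKspec v hv] at h0
    exact_mod_cast h0
  have hexpand : toQ (x + y) = ∑ v ∈ τ, (K v : ℚ) • toQ v := by
    conv_lhs => rw [hspan hcard (toQ (x + y))]
    exact Finset.sum_congr rfl fun v hv => by rw [hKspec v hv]
  have husum : u (toQ (x + y)) = ((∑ v ∈ τ, K v : ℤ) : ℚ) := by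
    rw [hexpand, map_sum]
    have hstep : ∑ v ∈ τ, u ((K v : ℚ) • toQ v) = ∑ v ∈ τ, ((K v : ℤ) : ℚ) :=
      Finset.sum_congr rfl fun v hv => by rw [map_smul, hu1 v hv, smul_eq_mul, mul_one]
    rw [hstep]
    push_cast
    rfl
  have hnotboth : ¬(x ∈ τ ∧ y ∈ τ) := fun ⟨h1, h2⟩ =>
    hnc (F.downward τ hτ _ (pair_subset h1 h2))
  have huxy : u (toQ (x + y)) ≤ 1 := by
    rw [toQ_add, map_add]
    by_cases hxτ : x ∈ τ
    · have hyτ : y ∉ τ := fun h => hnotboth ⟨hxτ, h⟩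
      have h1 := hule0 y hy hyτ
      have h2 := hule x hx
      linarith
    · have h1 := hule0 x hx hxτ
      have h2 := hule y hy
      linarith
  have hsum1 : ∑ v ∈ τ, K v ≤ 1 := by
    rw [husum] at huxy
    exact_mod_cast huxy
  by_cases hall : ∀ v ∈ τ, K v = 0
  · left
    have : toQ (x + y) = 0 := by
      rw [hexpand]
      have hstep : ∑ v ∈ τ, ((K v : ℤ) : ℚ) • toQ v = ∑ v ∈ τ, (0 : ℚ) • toQ v :=
        Finset.sum_congr rfl fun v hv => by rw [hall v hv]; simp
      rw [hstep]
      simp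
    exact toQ_inj (by rw [this, toQ_zero])
  · right
    push_neg at hall
    obtain ⟨v₀, hv₀, hKv₀⟩ := hall
    have hKv₀1 : 1 ≤ K v₀ := lt_of_le_of_ne (hKnn v₀ hv₀) (Ne.symm hKv₀)
    have hsplit : ∑ v ∈ τ, K v = K v₀ + ∑ v ∈ τ.erase v₀, K v :=
      (Finset.add_sum_erase τ K hv₀).symm
    have hrest_nonneg : ∀ v ∈ τ.erase v₀, 0 ≤ K v :=
      fun v hv => hKnn v (Finset.mem_of_mem_erase hv)
    have hrest_sum : ∑ v ∈ τ.erase v₀, K v = 0 := by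
      have h1 : 0 ≤ ∑ v ∈ τ.erase v₀, K v := Finset.sum_nonneg hrest_nonneg
      omega
    have hrest0 : ∀ v ∈ τ.erase v₀, K v = 0 :=
      (Finset.sum_eq_zero_iff_of_nonneg hrest_nonneg).1 hrest_sum
    have hKv₀eq : K v₀ = 1 := by omega
    have hfin : toQ (x + y) = toQ v₀ := by
      rw [hexpand, ← Finset.add_sum_erase τ (fun v => ((K v : ℤ) : ℚ) • toQ v) hv₀]
      have hstep : ∑ v ∈ τ.erase v₀, ((K v : ℤ) : ℚ) • toQ v = ∑ v ∈ τ.erase v₀, (0 : ℚ) • toQ v :=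
        Finset.sum_congr rfl fun v hv => by rw [hrest0 v hv]; simp
      rw [hstep, hKv₀eq]
      simp
    rw [toQ_inj hfin]
    exact F.cones_subset τ hτ hv₀

/-- If `a + b = c` with all three generators, then `{a,c}` is a cone of the fan. -/
lemma pair_cone_of_sum_gen (F : Fan n) (hF : IsFano F) {a b c : NZ n}
    (ha : a ∈ F.gens) (hb : b ∈ F.gens) (hc : c ∈ F.gens)
    (habc : a + b = c) : ({a, c} : Finset (NZ n)) ∈ F.cones := by
  classical
  obtain ⟨τ, hτ, hcard, hpm, w, happ⟩ :=
    exists_max_cone_approach F (toQ c) (toQ c - toQ b)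
  obtain ⟨L, hdelta, hint, hspan⟩ := exists_coords F hτ
  obtain ⟨u, hu1, hu2, huint, hule, hule0, humem⟩ := fano_functional F hF hτ hcard
  have hcτ : c ∈ τ := gen_mem_of_mem_coneSpan F hc hτ hpm
  have ha0 : a ≠ 0 := gen_ne_zero F ha
  have hbc : b ≠ c := fun h => ha0 (by
    have : a + b = b := by rw [habc, h]
    exact add_right_cancel (by rw [this, zero_add]))
  have hsum : u (toQ a) + u (toQ b) = 1 := by
    have h1 : toQ a + toQ b = toQ c := by rw [← toQ_add, habc]
    have := hu1 c hcτ
    rw [← h1, map_add] at this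
    exact this
  by_cases hbτ : b ∈ τ
  · exfalso
    set M := 1 + |L b w| with hM
    have hMpos : (0:ℚ) < M := by positivity
    obtain ⟨δ, hδ0, hδlt, hzmem⟩ := happ (1 / M) (by positivity)
    have h0 := coord_nonneg_of_mem hdelta hzmem hbτ
    have hLbc : L b (toQ c) = 0 := by
      rw [hdelta b hbτ c hcτ, if_neg hbc.symm]
    have hLbb : L b (toQ b) = 1 := by
      rw [hdelta b hbτ b hbτ, if_pos rfl]
    have hexp : L b (toQ c + δ • (toQ c - toQ b) + (δ * δ) • w)
        = -δ + (δ * δ) * L b w := by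
      rw [map_add, map_add, map_smul, map_smul, map_sub, hLbc, hLbb]
      simp only [smul_eq_mul]
      ring
    rw [hexp] at h0
    have hδM : δ * M < 1 := by
      rw [← (div_mul_cancel₀ (1:ℚ) (ne_of_gt hMpos) : 1 / M * M = 1)]
      exact mul_lt_mul_of_pos_right hδlt hMpos
    have h1 : (δ * δ) * L b w ≤ (δ * δ) * |L b w| :=
      mul_le_mul_of_nonneg_left (le_abs_self _) (by positivity)
    have h2 : δ * 1 ≤ δ * (δ * |L b w|) := by nlinarith [h0, h1]
    have h3 : 1 ≤ δ * |L b w| := le_of_mul_le_mul_left h2 hδ0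
    rw [hM] at hδM
    nlinarith [abs_nonneg (L b w), hδ0]
  · have hub := hule0 b hb hbτ
    have hua : u (toQ a) = 1 := le_antisymm (hule a ha) (by linarith)
    have haτ : a ∈ τ := humem a ha hua
    exact F.downward τ hτ _ (pair_subset haτ hcτ)

lemma gen_eq_of_smul (F : Fan n) {g a : NZ n} (hg : g ∈ F.gens) (ha : a ∈ F.gens)
    {k : ℚ} (hk : 0 ≤ k) (h : toQ g = k • toQ a) : g = a := by
  have hmem : toQ g ∈ coneSpan ({a} : Finset (NZ n)) := by
    refine ⟨fun _ => k, fun _ => hk, ?_⟩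
    rw [Finset.sum_singleton, h]
  have := gen_mem_of_mem_coneSpan F hg (F.gens_mem a ha) hmem
  exact Finset.mem_singleton.1 this

lemma no_gen_in_pair_interior (F : Fan n) {g a b : NZ n} (hg : g ∈ F.gens) (hab : a ≠ b)
    (hc : ({a, b} : Finset (NZ n)) ∈ F.cones) (h : toQ g = toQ a + toQ b)
    (ha0 : a ≠ 0) (hb0 : b ≠ 0) : False := by
  have hmem : toQ g ∈ coneSpan ({a, b} : Finset (NZ n)) := by
    rw [h]; exact add_mem_coneSpan_pair hab
  have hgab := gen_mem_of_mem_coneSpan F hg hc hmem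
  rcases Finset.mem_insert.1 hgab with rfl | hgb
  · have : toQ b = 0 := by
      have h2 : toQ g = toQ g + toQ b := h
      linear_combination (norm := skip) h2.symm
      abel
    exact hb0 (toQ_eq_zero_iff.1 this)
  · rw [Finset.mem_singleton.1 hgb] at h
    have : toQ a = 0 := by
      linear_combination (norm := skip) h.symm
      abel
    exact ha0 (toQ_eq_zero_iff.1 this)

lemma sum_pair_indicator {τ : Finset (NZ n)} {a b : NZ n} (ha : a ∈ τ) (hb : b ∈ τ)
    (hab : a ≠ b) :
    ∑ v ∈ τ, (if v = a ∨ v = b then (1 : ℚ) else 0) • toQ v = toQ a + toQ b := by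
  classical
  rw [← Finset.sum_subset (pair_subset ha hb)]
  · rw [Finset.sum_pair hab]
    simp
  · intro v hv hvn
    have hna : ¬(v = a ∨ v = b) := by
      rintro (rfl | rfl)
      · exact hvn (Finset.mem_insert_self _ _)
      · exact hvn (Finset.mem_insert_of_mem (Finset.mem_singleton_self _))
    rw [if_neg hna, zero_smul]

/-- The key lemma: if `x + y₁` and `x + y₂` are both generators of the Fano fan,
with `y₁ ≠ y₂`, then `x + y₁ + y₂ = 0` or `x + y₁ + y₂ = -x`. -/
lemma key_pair (F : Fan n) (hF : IsFano F) {x y₁ y₂ : NZ n}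
    (hx : x ∈ F.gens) (hy₁ : y₁ ∈ F.gens) (hy₂ : y₂ ∈ F.gens) (hne : y₁ ≠ y₂)
    (hz₁ : x + y₁ ∈ F.gens) (hz₂ : x + y₂ ∈ F.gens) :
    x + y₁ + y₂ = 0 ∨ x + y₁ + y₂ = -x := by
  classical
  have hx0 : x ≠ 0 := gen_ne_zero F hx
  have hy₁0 : y₁ ≠ 0 := gen_ne_zero F hy₁
  have hy₂0 : y₂ ≠ 0 := gen_ne_zero F hy₂
  have hz₁0 : x + y₁ ≠ 0 := gen_ne_zero F hz₁
  have hz₂0 : x + y₂ ≠ 0 := gen_ne_zero F hz₂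
  -- x differs from y₁, y₂
  have hxy : ∀ y : NZ n, y ∈ F.gens → x + y ∈ F.gens → x ≠ y := by
    intro y hy hz hxye
    have h2 : toQ (x + y) = (2 : ℚ) • toQ x := by
      rw [← hxye, toQ_add]
      funext i; simp [toQ]; ring
    have := gen_eq_of_smul F hz hx (by norm_num) h2
    rw [← hxye] at this
    have : x = 0 := by
      have h3 : x + x = x := this
      simpa using h3
    exact hx0 this
  have hxy₁ : x ≠ y₁ := hxy y₁ hy₁ hz₁
  have hxy₂ : x ≠ y₂ := hxy y₂ hy₂ hz₂
  -- {x, y_i} are not cones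
  have hnc : ∀ y : NZ n, y ∈ F.gens → x + y ∈ F.gens → x ≠ y →
      ({x, y} : Finset (NZ n)) ∉ F.cones := by
    intro y hy hz hxye hcone
    exact no_gen_in_pair_interior F hz hxye hcone (toQ_add x y) hx0 (gen_ne_zero F hy)
  have hncy₁ : ({x, y₁} : Finset (NZ n)) ∉ F.cones := hnc y₁ hy₁ hz₁ hxy₁
  have hncy₂ : ({x, y₂} : Finset (NZ n)) ∉ F.cones := hnc y₂ hy₂ hz₂ hxy₂
  -- distinctness of z's
  have hzz : x + y₁ ≠ x + y₂ := fun h => hne (add_left_cancel h)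
  have hz₁y₂ : x + y₁ ≠ y₂ := by
    intro h
    have := pair_cone_of_sum_gen F hF hx hy₁ (h ▸ hz₁) h
    exact hncy₂ this
  have hz₂y₁ : x + y₂ ≠ y₁ := by
    intro h
    have := pair_cone_of_sum_gen F hF hx hy₂ (h ▸ hz₂) h
    exact hncy₁ this
  have hz₁y₁ : x + y₁ ≠ y₁ := fun h => hx0 (by simpa using h)
  have hz₂y₂ : x + y₂ ≠ y₂ := fun h => hx0 (by simpa using h)
  have hz₁x : x + y₁ ≠ x := fun h => hy₁0 (by simpa using h)
  have hz₂x : x + y₂ ≠ x := fun h => hy₂0 (by simpa using h)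
  -- main case split
  by_cases hs0 : x + y₁ + y₂ = 0
  · exact Or.inl hs0
  -- s is a generator
  have hsz₁ : (x + y₁) + y₂ = x + y₁ + y₂ := rfl
  have hsz₂ : (x + y₂) + y₁ = x + y₁ + y₂ := by abel
  have htoQs₁ : toQ (x + y₁ + y₂) = toQ (x + y₁) + toQ y₂ := by rw [← toQ_add]
  have htoQs₂ : toQ (x + y₁ + y₂) = toQ (x + y₂) + toQ y₁ := by rw [← toQ_add, hsz₂]
  have hpairnc : ¬(({x + y₁, y₂} : Finset (NZ n)) ∈ F.cones ∧
      ({x + y₂, y₁} : Finset (NZ n)) ∈ F.cones) := by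
    rintro ⟨h1, h2⟩
    have hp1 : toQ (x + y₁ + y₂) ∈ relInt ({x + y₁, y₂} : Finset (NZ n)) := by
      rw [htoQs₁]; exact add_mem_relInt_pair hz₁y₂
    have hp2 : toQ (x + y₁ + y₂) ∈ coneSpan ({x + y₂, y₁} : Finset (NZ n)) := by
      rw [htoQs₂]; exact add_mem_coneSpan_pair hz₂y₁
    have hsub := subset_of_relInt_mem_coneSpan F h1 h2 hp1 hp2
    have := hsub (Finset.mem_insert_self _ _)
    rcases Finset.mem_insert.1 this with h | h
    · exact hzz h
    · rw [Finset.mem_singleton] at h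
      exact hz₁y₁ h
  have hsgen : x + y₁ + y₂ ∈ F.gens := by
    by_cases h2c : ({x + y₂, y₁} : Finset (NZ n)) ∈ F.cones
    · have h1c : ({x + y₁, y₂} : Finset (NZ n)) ∉ F.cones := fun h => hpairnc ⟨h, h2c⟩
      rcases degree_two F hF hz₁ hy₂ hz₁y₂ h1c with h | h
      · exact absurd (by rw [← hsz₁]; exact h) hs0
      · rwa [hsz₁] at h
    · rcases degree_two F hF hz₂ hy₁ hz₂y₁ h2c with h | h
      · exact absurd (by rw [← hsz₂]; exact h) hs0
      · rwa [hsz₂] at h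
  -- {z₁, s} is a cone
  have hsz₁ne : x + y₁ ≠ x + y₁ + y₂ := fun h => hy₂0 (by
    have : (x + y₁) + y₂ = (x + y₁) + 0 := by rw [add_zero, ← h]
    exact add_left_cancel this)
  have hsz₂ne : x + y₂ ≠ x + y₁ + y₂ := fun h => hy₁0 (by
    have : (x + y₂) + y₁ = (x + y₂) + 0 := by rw [add_zero, hsz₂, ← h]
    exact add_left_cancel this)
  have hz₁s : ({x + y₁, x + y₁ + y₂} : Finset (NZ n)) ∈ F.cones :=
    pair_cone_of_sum_gen F hF hz₁ hy₂ hsgen rfl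
  -- s ≠ x
  have hsx : x + y₁ + y₂ ≠ x := by
    intro h
    have h12 : y₁ + y₂ = 0 := by
      have : x + (y₁ + y₂) = x + 0 := by rw [add_zero, ← add_assoc, h]
      exact add_left_cancel this
    have hcx : (x + y₁) + y₂ = x := by rw [add_assoc, h12, add_zero]
    have hccc := pair_cone_of_sum_gen F hF hy₂ hz₁ hx (show y₂ + (x + y₁) = x by rw [add_comm y₂ (x + y₁)]; exact hcx)
    rw [Finset.pair_comm] at hccc
    exact hncy₂ hccc
  -- {x, s} is not a cone
  have hxns : x ≠ x + y₁ + y₂ := fun h => hsx h.symm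
  have hxs_nc : ({x, x + y₁ + y₂} : Finset (NZ n)) ∉ F.cones := by
    intro hcone
    obtain ⟨τ, hτ, hcard, hpm, -⟩ :=
      exists_max_cone_approach F (toQ x + toQ (x + y₁ + y₂)) 0
    have hsub := subset_of_relInt_mem_coneSpan F hcone hτ (add_mem_relInt_pair hxns) hpm
    have hxτ : x ∈ τ := hsub (Finset.mem_insert_self _ _)
    have hsτ : x + y₁ + y₂ ∈ τ :=
      hsub (Finset.mem_insert_of_mem (Finset.mem_singleton_self _))
    obtain ⟨u, hu1, hu2, huint, hule, hule0, humem⟩ := fano_functional F hF hτ hcard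
    have hux : u (toQ x) = 1 := hu1 x hxτ
    have hus : u (toQ (x + y₁ + y₂)) = 1 := hu1 _ hsτ
    have huz₁ : u (toQ (x + y₁)) = 1 + u (toQ y₁) := by rw [toQ_add, map_add, hux]
    have huz₂ : u (toQ (x + y₂)) = 1 + u (toQ y₂) := by rw [toQ_add, map_add, hux]
    have huy₁le : u (toQ y₁) ≤ 0 := by have := hule _ hz₁; linarith
    have huy₂le : u (toQ y₂) ≤ 0 := by have := hule _ hz₂; linarith
    have hus' : u (toQ (x + y₁ + y₂)) = 1 + u (toQ y₁) + u (toQ y₂) := by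
      rw [toQ_add, map_add, toQ_add, map_add, hux]
    have hy₁u : u (toQ y₁) = 0 := by rw [hus'] at hus; linarith
    have hy₂u : u (toQ y₂) = 0 := by rw [hus'] at hus; linarith
    have hz₁τ : x + y₁ ∈ τ := humem _ hz₁ (by rw [huz₁, hy₁u]; ring)
    have hz₂τ : x + y₂ ∈ τ := humem _ hz₂ (by rw [huz₂, hy₂u]; ring)
    have hvecsum : ∑ v ∈ τ, (if v = x ∨ v = x + y₁ + y₂ then (1:ℚ) else 0) • toQ v
        = ∑ v ∈ τ, (if v = x + y₁ ∨ v = x + y₂ then (1:ℚ) else 0) • toQ v := by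
      rw [sum_pair_indicator hxτ hsτ hxns, sum_pair_indicator hz₁τ hz₂τ hzz]
      funext i
      simp only [toQ, Pi.add_apply]
      push_cast
      ring
    have hcu := coeff_unique F hτ hvecsum x hxτ
    rw [if_pos (Or.inl rfl)] at hcu
    have hxz : ¬(x = x + y₁ ∨ x = x + y₂) := by
      rintro (h | h)
      · exact hz₁x h.symm
      · exact hz₂x h.symm
    rw [if_neg hxz] at hcu
    norm_num at hcu
  rcases degree_two F hF hx hsgen hxns hxs_nc with hw0 | hwgen
  · exact Or.inr (eq_neg_of_add_eq_zero_right hw0)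
  · exfalso
    -- wv := x + (x + y₁ + y₂) is a generator; derive a contradiction
    have hy₁w : y₁ ≠ x + (x + y₁ + y₂) := by
      intro h
      have h3 : x + x + y₂ = 0 := by
        funext i
        have hh := congrFun h i
        simp only [Pi.add_apply, Pi.zero_apply] at hh ⊢
        omega
      have h5 : ∀ i, y₂ i = 2 * (x i + y₂ i) := by
        intro i
        have hh := congrFun h3 i
        simp only [Pi.add_apply, Pi.zero_apply] at hh
        omega
      have h4 : toQ y₂ = (2:ℚ) • toQ (x + y₂) := by
        funext i
        simp only [toQ, Pi.smul_apply, Pi.add_apply, smul_eq_mul]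
        exact_mod_cast h5 i
      have h6 := gen_eq_of_smul F hy₂ hz₂ (by norm_num : (0:ℚ) ≤ 2) h4
      exact hx0 (by
        have : x + y₂ = 0 + y₂ := by rw [zero_add, ← h6]
        exact add_right_cancel this)
    have hy₁w_nc : ({y₁, x + (x + y₁ + y₂)} : Finset (NZ n)) ∉ F.cones := by
      intro hcone
      have hid : toQ y₁ + toQ (x + (x + y₁ + y₂))
          = toQ (x + y₁) + toQ (x + y₁ + y₂) := by
        funext i
        simp only [toQ, Pi.add_apply]
        push_cast
        ring
      have hp1 : toQ y₁ + toQ (x + (x + y₁ + y₂))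
          ∈ relInt ({y₁, x + (x + y₁ + y₂)} : Finset (NZ n)) := add_mem_relInt_pair hy₁w
      have hp2 : toQ y₁ + toQ (x + (x + y₁ + y₂))
          ∈ coneSpan ({x + y₁, x + y₁ + y₂} : Finset (NZ n)) := by
        rw [hid]; exact add_mem_coneSpan_pair hsz₁ne
      have hsub := subset_of_relInt_mem_coneSpan F hcone hz₁s hp1 hp2
      have hy₁in := hsub (Finset.mem_insert_self _ _)
      rcases Finset.mem_insert.1 hy₁in with h | h
      · exact hz₁y₁ h.symm
      · rw [Finset.mem_singleton] at h
        apply hz₂0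
        funext i
        have hh := congrFun h i
        simp only [Pi.add_apply, Pi.zero_apply] at hh ⊢
        omega
    rcases degree_two F hF hy₁ hwgen hy₁w hy₁w_nc with h0 | hg
    · have hid0 : toQ (x + y₁) + toQ (x + y₁ + y₂) = 0 := by
        have h1 : toQ (y₁ + (x + (x + y₁ + y₂))) = 0 := by rw [h0, toQ_zero]
        rw [← h1]
        funext i
        simp only [toQ, Pi.add_apply]
        push_cast
        ring
      have hceq : ∑ v ∈ ({x + y₁, x + y₁ + y₂} : Finset (NZ n)), (1:ℚ) • toQ v
          = ∑ v ∈ ({x + y₁, x + y₁ + y₂} : Finset (NZ n)), (0:ℚ) • toQ v := by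
        rw [Finset.sum_pair hsz₁ne, Finset.sum_pair hsz₁ne]
        simp only [one_smul, zero_smul, add_zero]
        rw [hid0]
      have hcu := coeff_unique F hz₁s hceq (x + y₁) (Finset.mem_insert_self _ _)
      norm_num at hcu
    · have hidg : toQ (y₁ + (x + (x + y₁ + y₂)))
          = toQ (x + y₁) + toQ (x + y₁ + y₂) := by
        funext i
        simp only [toQ, Pi.add_apply]
        push_cast
        ring
      exact no_gen_in_pair_interior F hg hsz₁ne hz₁s hidg hz₁0 (gen_ne_zero F hsgen)


/-- If `{x,y}` is a cone of the refining fan and `x ∈ relInt η`, `y ∈ G(Σ_Y)`, then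
`η ∪ {y}` is a cone of `Σ_Y`. -/
lemma cone_transfer {FX FY : Fan n} (href : Refines FX FY) {x y : NZ n}
    {η : Finset (NZ n)} (hη : η ∈ FY.cones) (hrel : toQ x ∈ relInt η)
    (hyY : y ∈ FY.gens) (hxy : x ≠ y)
    (hcone : ({x, y} : Finset (NZ n)) ∈ FX.cones) :
    insert y η ∈ FY.cones := by
  obtain ⟨τ₀, hτ₀, hpτ₀⟩ := FY.complete (toQ x + toQ y)
  obtain ⟨S, hS, hU⟩ := href τ₀ hτ₀
  have hp : toQ x + toQ y ∈ ⋃ σ ∈ S, coneSpan σ := by rw [← hU]; exact hpτ₀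
  rw [Set.mem_iUnion₂] at hp
  obtain ⟨σ₁, hσ₁S, hpσ₁⟩ := hp
  have hσ₁ : σ₁ ∈ FX.cones := hS hσ₁S
  have hsub := subset_of_relInt_mem_coneSpan FX hcone hσ₁ (add_mem_relInt_pair hxy) hpσ₁
  have hxσ : toQ x ∈ coneSpan σ₁ := mem_coneSpan_of_mem (hsub (Finset.mem_insert_self _ _))
  have hyσ : toQ y ∈ coneSpan σ₁ :=
    mem_coneSpan_of_mem (hsub (Finset.mem_insert_of_mem (Finset.mem_singleton_self _)))
  have hxτ₀ : toQ x ∈ coneSpan τ₀ := by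
    rw [hU, Set.mem_iUnion₂]; exact ⟨σ₁, hσ₁S, hxσ⟩
  have hyτ₀ : toQ y ∈ coneSpan τ₀ := by
    rw [hU, Set.mem_iUnion₂]; exact ⟨σ₁, hσ₁S, hyσ⟩
  have hηsub : η ⊆ τ₀ := subset_of_relInt_mem_coneSpan FY hη hτ₀ hrel hxτ₀
  have hyτ : y ∈ τ₀ := gen_mem_of_mem_coneSpan FY hyY hτ₀ hyτ₀
  exact FY.downward τ₀ hτ₀ _ (Finset.insert_subset hyτ hηsub)

/-- Generators of the subdivided fan include those of the base fan. -/
lemma gen_lift {FX FY : Fan n} (href : Refines FX FY) {y : NZ n} (hyY : y ∈ FY.gens) :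
    y ∈ FX.gens := by
  classical
  obtain ⟨S, hS, hU⟩ := href {y} (FY.gens_mem y hyY)
  have hy : toQ y ∈ coneSpan ({y} : Finset (NZ n)) :=
    mem_coneSpan_of_mem (Finset.mem_singleton_self _)
  rw [hU, Set.mem_iUnion₂] at hy
  obtain ⟨σ₁, hσ₁S, hpσ₁⟩ := hy
  have hσ₁ : σ₁ ∈ FX.cones := hS hσ₁S
  have hy0 : toQ y ≠ 0 := toQ_gen_ne_zero FY hyY
  have hvray : ∀ v, v ∈ σ₁ → ∃ c : ℚ, 0 ≤ c ∧ toQ v = c • toQ y := by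
    intro v hv
    have h1 : toQ v ∈ coneSpan σ₁ := mem_coneSpan_of_mem hv
    have h2 : toQ v ∈ coneSpan ({y} : Finset (NZ n)) := by
      rw [hU, Set.mem_iUnion₂]; exact ⟨σ₁, hσ₁S, h1⟩
    obtain ⟨c, hc, hcv⟩ := h2
    exact ⟨c y, hc y, by rwa [Finset.sum_singleton] at hcv⟩
  set cf : NZ n → ℚ := fun v => if h : v ∈ σ₁ then (hvray v h).choose else 0 with hcf
  have hcf0 : ∀ v ∈ σ₁, 0 ≤ cf v := fun v hv => by
    rw [hcf]; dsimp only; rw [dif_pos hv]; exact (hvray v hv).choose_spec.1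
  have hcfeq : ∀ v ∈ σ₁, toQ v = cf v • toQ y := fun v hv => by
    rw [hcf]; dsimp only; rw [dif_pos hv]; exact (hvray v hv).choose_spec.2
  obtain ⟨d, hd, hds⟩ := hpσ₁
  have hsum : toQ y = (∑ v ∈ σ₁, d v * cf v) • toQ y := by
    conv_lhs => rw [hds]
    rw [Finset.sum_smul]
    refine Finset.sum_congr rfl fun v hv => ?_
    rw [hcfeq v hv, smul_smul]
  have hsum1 : (∑ v ∈ σ₁, d v * cf v) = 1 := by
    by_contra hne
    have h1 : ((∑ v ∈ σ₁, d v * cf v) - 1) • toQ y = 0 := by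
      rw [sub_smul, one_smul, ← hsum, sub_self]
    rcases smul_eq_zero.1 h1 with h | h
    · exact hne (by linarith [sub_eq_zero.1 h])
    · exact hy0 h
  have hex : ∃ v₀ ∈ σ₁, d v₀ * cf v₀ ≠ 0 := by
    by_contra hc
    push_neg at hc
    rw [Finset.sum_eq_zero hc] at hsum1
    norm_num at hsum1
  obtain ⟨v₀, hv₀, hdv₀⟩ := hex
  have hc₀pos : 0 < cf v₀ := lt_of_le_of_ne (hcf0 v₀ hv₀) (by
    intro h; exact hdv₀ (by rw [← h, mul_zero]))
  have hv₀X : v₀ ∈ FX.gens := FX.cones_subset σ₁ hσ₁ hv₀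
  have hv₀eq : toQ v₀ = cf v₀ • toQ y := hcfeq v₀ hv₀
  -- integrality of cf v₀ via coordinates on {y} in FY
  obtain ⟨LY, hLYd, hLYi, -⟩ := exists_coords FY (FY.gens_mem y hyY)
  have hLYy : LY y (toQ y) = 1 := by
    rw [hLYd y (Finset.mem_singleton_self _) y (Finset.mem_singleton_self _), if_pos rfl]
  have hc₀int : ∃ k : ℤ, cf v₀ = (k : ℚ) := by
    obtain ⟨k, hk⟩ := hLYi y (Finset.mem_singleton_self _) v₀
    refine ⟨k, ?_⟩
    rw [← hk, hv₀eq, map_smul, hLYy, smul_eq_mul, mul_one]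
  -- integrality of (cf v₀)⁻¹ via coordinates on {v₀} in FX
  have hv₀c : ({v₀} : Finset (NZ n)) ∈ FX.cones := FX.gens_mem v₀ hv₀X
  obtain ⟨LX, hLXd, hLXi, -⟩ := exists_coords FX hv₀c
  have hLXv : LX v₀ (toQ v₀) = 1 := by
    rw [hLXd v₀ (Finset.mem_singleton_self _) v₀ (Finset.mem_singleton_self _), if_pos rfl]
  have hyeq : toQ y = (cf v₀)⁻¹ • toQ v₀ := by
    rw [hv₀eq, smul_smul, inv_mul_cancel₀ (ne_of_gt hc₀pos), one_smul]
  have hcinvint : ∃ m : ℤ, (cf v₀)⁻¹ = (m : ℚ) := by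
    obtain ⟨m, hm⟩ := hLXi v₀ (Finset.mem_singleton_self _) y
    refine ⟨m, ?_⟩
    rw [← hm, hyeq, map_smul, hLXv, smul_eq_mul, mul_one]
  obtain ⟨k, hk⟩ := hc₀int
  obtain ⟨m, hm⟩ := hcinvint
  have hk1 : (1:ℤ) ≤ k := by
    have : (0:ℚ) < (k:ℚ) := by rw [← hk]; exact hc₀pos
    exact_mod_cast this
  have hm1 : (1:ℤ) ≤ m := by
    have : (0:ℚ) < (m:ℚ) := by rw [← hm]; positivity
    exact_mod_cast this
  have hkm : k * m = 1 := by
    have : ((k * m : ℤ) : ℚ) = 1 := by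
      push_cast
      rw [← hk, ← hm, mul_inv_cancel₀ (ne_of_gt hc₀pos)]
    exact_mod_cast this
  have hkone : k = 1 := by nlinarith
  have : cf v₀ = 1 := by rw [hk, hkone]; norm_num
  rw [this, one_smul] at hv₀eq
  rwa [← toQ_inj hv₀eq]


end Aux

end ToricFano

namespace ToricFano

/-- Let the Fano fan `Σ_X` refine the smooth complete fan `Σ_Y` (an equivariant
birational morphism `f : X → Y`), let `x ∈ G(Σ_X)` lie in the relative interior of the
cone `η ∈ Σ_Y` of dimension `k`, so `f` maps `E = V(x)` onto `A = V(η)`. Then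
`ρ_Y - ρ_A ≤ 3`, where `ρ_Y = #G(Σ_Y) - n` and
`ρ_A = #{(k+1)-cones of Σ_Y containing η} - (n-k)`. -/
theorem picard_drop_of_image {n : ℕ} (FX FY : Fan n)
    (hFano : IsFano FX) (href : Refines FX FY)
    (x : NZ n) (hx : x ∈ FX.gens) (η : Finset (NZ n)) (hη : η ∈ FY.cones)
    (hrel : toQ x ∈ relInt η) :
    ((FY.gens.card : ℤ) - n) -
      (((FY.cones.filter (fun σ => η ⊆ σ ∧ σ.card = η.card + 1)).card : ℤ) -
        ((n : ℤ) - η.card)) ≤ 3 := by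
  classical
  rcases Nat.eq_zero_or_pos n with hn0 | hnpos
  · subst hn0
    have hgens : FY.gens = ∅ := by
      rw [Finset.eq_empty_iff_forall_notMem]
      intro g hg
      obtain ⟨B, hB⟩ := FY.smooth _ (FY.gens_mem g hg)
      have hgm : g ∈ (↑({g} : Finset (NZ 0)) : Set (NZ 0)) := by simp
      obtain ⟨i, -⟩ := hB hgm
      exact i.elim0
    have hηe : η = ∅ := Finset.subset_empty.1 (hgens ▸ FY.cones_subset η hη)
    have hfilter : FY.cones.filter (fun σ => η ⊆ σ ∧ σ.card = η.card + 1) = ∅ := by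
      rw [Finset.eq_empty_iff_forall_notMem]
      intro σ hσ
      rw [Finset.mem_filter] at hσ
      have hσe : σ = ∅ := Finset.subset_empty.1 (hgens ▸ FY.cones_subset σ hσ.1)
      rw [hσe, hηe] at hσ
      simp at hσ
    rw [hfilter, hgens, hηe]
    norm_num
  have hx0 : x ≠ 0 := gen_ne_zero FX hx
  have hηg : η ⊆ FY.gens := FY.cones_subset η hη
  set f1 := FY.gens.filter (fun y => y ∉ η ∧ insert y η ∈ FY.cones) with hf1
  set Bset := FY.gens.filter (fun y => y ∉ η ∧ insert y η ∉ FY.cones) with hBdef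
  -- partition of the generators
  have hcards : FY.gens.card = η.card + f1.card + Bset.card := by
    have h1 := Finset.card_filter_add_card_filter_not
      (s := FY.gens) (p := fun y => y ∈ η)
    have h2 : FY.gens.filter (fun y => y ∈ η) = η := by
      ext y
      rw [Finset.mem_filter]
      exact ⟨fun h => h.2, fun h => ⟨hηg h, h⟩⟩
    have h3 := Finset.card_filter_add_card_filter_not
      (s := FY.gens.filter (fun y => ¬ y ∈ η)) (p := fun y => insert y η ∈ FY.cones)
    rw [Finset.filter_filter, Finset.filter_filter] at h3
    rw [h2] at h1
    have hf1' : f1 = FY.gens.filter (fun a => ¬a ∈ η ∧ insert a η ∈ FY.cones) := rfl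
    have hB' : Bset = FY.gens.filter (fun a => ¬a ∈ η ∧ ¬insert a η ∈ FY.cones) := rfl
    rw [hf1', hB']
    omega
  -- the (k+1)-cones containing η biject with f1
  have hbij : (FY.cones.filter (fun σ => η ⊆ σ ∧ σ.card = η.card + 1)).card = f1.card := by
    symm
    apply Finset.card_bij (fun y _ => insert y η)
    · intro y hy
      rw [hf1, Finset.mem_filter] at hy
      rw [Finset.mem_filter]
      refine ⟨hy.2.2, Finset.subset_insert _ _, ?_⟩
      rw [Finset.card_insert_of_notMem hy.2.1]
    · intro y₁ h₁ y₂ h₂ he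
      have hm : y₁ ∈ insert y₂ η := by rw [← he]; exact Finset.mem_insert_self _ _
      rcases Finset.mem_insert.1 hm with h | h
      · exact h
      · rw [hf1, Finset.mem_filter] at h₁
        exact absurd h h₁.2.1
    · intro σ hσ
      rw [Finset.mem_filter] at hσ
      have hσc := hσ.1
      have hσsub := hσ.2.1
      have hσcard := hσ.2.2
      have hηcard : η.card < σ.card := by omega
      have hne : (σ \ η).Nonempty := by
        rw [← Finset.card_pos, Finset.card_sdiff_of_subset hσsub]
        omega
      obtain ⟨y, hy⟩ := hne
      have hyσ : y ∈ σ := (Finset.mem_sdiff.1 hy).1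
      have hyη : y ∉ η := (Finset.mem_sdiff.1 hy).2
      have hins : insert y η = σ := by
        apply Finset.eq_of_subset_of_card_le
        · exact Finset.insert_subset hyσ hσsub
        · rw [Finset.card_insert_of_notMem hyη]
          omega
      refine ⟨y, ?_, hins⟩
      rw [hf1, Finset.mem_filter]
      exact ⟨FY.cones_subset σ hσc hyσ, hyη, by rw [hins]; exact hσc⟩
  -- key facts about elements of Bset
  have hkey : ∀ y ∈ Bset, y ∈ FX.gens ∧ x ≠ y ∧ (x + y = 0 ∨ x + y ∈ FX.gens) := by
    intro y hy
    rw [hBdef, Finset.mem_filter] at hy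
    have hyY := hy.1
    have hyη := hy.2.1
    have hyc := hy.2.2
    have hyX : y ∈ FX.gens := gen_lift href hyY
    have hxy : x ≠ y := by
      intro hxyeq
      have hmem : toQ x ∈ coneSpan ({y} : Finset (NZ n)) := by
        rw [hxyeq]
        exact mem_coneSpan_of_mem (Finset.mem_singleton_self _)
      have hsub := subset_of_relInt_mem_coneSpan FY hη (FY.gens_mem y hyY) hrel hmem
      rcases Finset.eq_empty_or_nonempty η with hee | ⟨e, he⟩
      · rw [hee] at hrel
        exact hx0 (toQ_eq_zero_iff.1 (mem_relInt_empty hrel))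
      · have := Finset.mem_singleton.1 (hsub he)
        rw [this] at he
        exact hyη he
    have hpairnc : ({x, y} : Finset (NZ n)) ∉ FX.cones := fun hc =>
      hyc (cone_transfer href hη hrel hyY hxy hc)
    exact ⟨hyX, hxy, degree_two FX hFano hx hyX hxy hpairnc⟩
  -- bound the cardinality of Bset
  have hsplit := Finset.card_filter_add_card_filter_not
    (s := Bset) (p := fun y => x + y = 0)
  have hB0 : (Bset.filter (fun y => x + y = 0)).card ≤ 1 := by
    rw [Finset.card_le_one]
    intro a ha b hb
    rw [Finset.mem_filter] at ha hb
    have : x + a = x + b := by rw [ha.2, hb.2]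
    exact add_left_cancel this
  have hB1 : (Bset.filter (fun y => ¬ x + y = 0)).card ≤ 2 := by
    by_contra hgt
    push_neg at hgt
    obtain ⟨y₁, hy₁, y₂, hy₂, y₃, hy₃, hne12, hne13, hne23⟩ := Finset.two_lt_card.1 hgt
    have hprop : ∀ y ∈ Bset.filter (fun y => ¬ x + y = 0),
        y ∈ FX.gens ∧ x + y ∈ FX.gens := by
      intro y hy
      rw [Finset.mem_filter] at hy
      obtain ⟨hyX, -, hsum⟩ := hkey y hy.1
      rcases hsum with h | h
      · exact absurd h hy.2
      · exact ⟨hyX, h⟩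
    obtain ⟨hg1, hz1⟩ := hprop y₁ hy₁
    obtain ⟨hg2, hz2⟩ := hprop y₂ hy₂
    obtain ⟨hg3, hz3⟩ := hprop y₃ hy₃
    have h12 := key_pair FX hFano hx hg1 hg2 hne12 hz1 hz2
    have h13 := key_pair FX hFano hx hg1 hg3 hne13 hz1 hz3
    have h23 := key_pair FX hFano hx hg2 hg3 hne23 hz2 hz3
    rcases h12 with e12 | e12 <;> rcases h13 with e13 | e13 <;> rcases h23 with e23 | e23 <;>
      first
      | exact hne23 (by
          funext i
          have a := congrFun e12 i
          have b := congrFun e13 i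
          simp only [Pi.add_apply, Pi.neg_apply, Pi.zero_apply] at a b
          omega)
      | exact hne13 (by
          funext i
          have a := congrFun e12 i
          have b := congrFun e23 i
          simp only [Pi.add_apply, Pi.neg_apply, Pi.zero_apply] at a b
          omega)
      | exact hne12 (by
          funext i
          have a := congrFun e13 i
          have b := congrFun e23 i
          simp only [Pi.add_apply, Pi.neg_apply, Pi.zero_apply] at a b
          omega)
  have hBle : Bset.card ≤ 3 := by omega
  rw [hbij]
  omega


end ToricFano
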